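/- Let u be a spacelike function on ℝⁿ\A with A ⊂ B₁, and suppose that max_{∂B₁} u = −min_{∂B₁} u = 1 − ε₀ for some ε₀ ∈ (0,1). Then max_{∂B_R} |u| ≤ R − ε₀ for every R > 1, and for every R ≥ (1+ε₀²)/(2ε₀) one has |u(x) − u(y)| < |x − y| for all x, y ∈ ∂B_R with x ≠ y. -/
import Mathlib


open MeasureTheory Filter Asymptotics Metric Set Bornology
open scoped InnerProductSpace

noncomputable section

/-- The maximal surface equation `div (Du / √(1 - |Du|²)) = 0` holding at a point `x`. -/
def MaxSurfEqAt {n : ℕ} (u : EuclideanSpace ℝ (Fin n) → ℝ) (x : EuclideanSpace ℝ (Fin n)) :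
    Prop :=
  ∑ i : Fin n,
      fderiv ℝ
        (fun y => (Real.sqrt (1 - ‖gradient u y‖ ^ 2))⁻¹ *
          fderiv ℝ u y (EuclideanSpace.single i 1)) x (EuclideanSpace.single i 1) = 0

/-- `u` is an exterior solution of the maximal surface equation on `ℝⁿ \ A`:
it is `C²` there, strictly spacelike (`|Du| < 1`), and solves the equation. -/
def IsExteriorSolution {n : ℕ} (A : Set (EuclideanSpace ℝ (Fin n)))
    (u : EuclideanSpace ℝ (Fin n) → ℝ) : Prop :=
  ContDiffOn ℝ 2 u Aᶜ ∧ (∀ x ∈ Aᶜ, ‖gradient u x‖ < 1) ∧ ∀ x ∈ Aᶜ, MaxSurfEqAt u x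

/-- `u` is spacelike on `Ω`: `|u x - u y| < |x - y|` whenever `x ≠ y` and the segment
from `x` to `y` lies in `Ω`. -/
def IsSpacelikeOn {n : ℕ} (u : EuclideanSpace ℝ (Fin n) → ℝ)
    (Ω : Set (EuclideanSpace ℝ (Fin n))) : Prop :=
  ∀ x ∈ Ω, ∀ y ∈ Ω, x ≠ y → segment ℝ x y ⊆ Ω → |u x - u y| < ‖x - y‖

/-- If a spacelike function on `ℝⁿ \ A` (`A ⊆ B₁`) has `max_{∂B₁} u = -min_{∂B₁} u = 1 - ε₀`,
then `max_{∂B_R}|u| ≤ R - ε₀` for `R > 1`, and `u` is spacelike with no segment restriction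
on every sphere `∂B_R` with `R ≥ (1+ε₀²)/(2ε₀)`. -/
theorem spacelike_on_spheres (n : ℕ) (A : Set (EuclideanSpace ℝ (Fin n)))
    (hAbd : IsBounded A) (hA1 : A ⊆ ball (0 : EuclideanSpace ℝ (Fin n)) 1)
    (u : EuclideanSpace ℝ (Fin n) → ℝ) (hu : IsSpacelikeOn u Aᶜ)
    (ε₀ : ℝ) (hε₀ : ε₀ ∈ Ioo (0 : ℝ) 1)
    (hmax : IsGreatest (u '' sphere (0 : EuclideanSpace ℝ (Fin n)) 1) (1 - ε₀))
    (hmin : IsLeast (u '' sphere (0 : EuclideanSpace ℝ (Fin n)) 1) (-(1 - ε₀))) :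
    (∀ R : ℝ, 1 < R → ∀ x ∈ sphere (0 : EuclideanSpace ℝ (Fin n)) R, |u x| ≤ R - ε₀) ∧
      ∀ R : ℝ, (1 + ε₀ ^ 2) / (2 * ε₀) ≤ R →
        ∀ x ∈ sphere (0 : EuclideanSpace ℝ (Fin n)) R,
          ∀ y ∈ sphere (0 : EuclideanSpace ℝ (Fin n)) R,
            x ≠ y → |u x - u y| < ‖x - y‖ := by
  obtain ⟨hε0, hε1⟩ := hε₀
  -- bound on the unit sphere
  have hunit : ∀ w : EuclideanSpace ℝ (Fin n), ‖w‖ = 1 → |u w| ≤ 1 - ε₀ := by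
    intro w hw
    have hwm : w ∈ sphere (0 : EuclideanSpace ℝ (Fin n)) 1 := by
      simp [mem_sphere_iff_norm, hw]
    have h1 := hmax.2 ⟨w, hwm, rfl⟩
    have h2 := hmin.2 ⟨w, hwm, rfl⟩
    rw [abs_le]; constructor <;> linarith
  have hnotA : ∀ w : EuclideanSpace ℝ (Fin n), 1 ≤ ‖w‖ → w ∈ Aᶜ := by
    intro w hw hwA
    have := hA1 hwA
    rw [mem_ball, dist_zero_right] at this
    linarith
  have part1 : ∀ R : ℝ, 1 < R → ∀ x ∈ sphere (0 : EuclideanSpace ℝ (Fin n)) R,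
      |u x| ≤ R - ε₀ := by
    intro R hR x hx
    rw [mem_sphere_iff_norm, sub_zero] at hx
    have hR0 : (0 : ℝ) < R := by linarith
    set x' := (R : ℝ)⁻¹ • x with hx'def
    have hx'n : ‖x'‖ = 1 := by
      rw [hx'def, norm_smul, hx, Real.norm_eq_abs, abs_of_pos (by positivity),
        inv_mul_cancel₀ hR0.ne']
    have hne : x ≠ x' := by
      intro h
      rw [← h] at hx'n
      rw [hx'n] at hx
      linarith
    have hseg : segment ℝ x x' ⊆ Aᶜ := by
      rintro z ⟨a, b, ha, hb, hab, rfl⟩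
      apply hnotA
      have : a • x + b • x' = (a + b * R⁻¹) • x := by
        rw [hx'def, smul_smul, ← add_smul]
      rw [this, norm_smul, hx, Real.norm_eq_abs]
      have hab' : a * R + b = (a + b * R⁻¹) * R := by
        field_simp
      have h1 : 1 ≤ a * R + b := by nlinarith
      rw [abs_of_nonneg (by positivity)]
      nlinarith
    have hlt := hu x (hnotA x (by rw [hx]; linarith)) x' (hnotA x' (by rw [hx'n])) hne hseg
    have hxx' : ‖x - x'‖ = R - 1 := by
      have : x - x' = (1 - R⁻¹) • x := by
        rw [hx'def, sub_smul, one_smul]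
      rw [this, norm_smul, hx, Real.norm_eq_abs]
      have h1 : (0:ℝ) ≤ 1 - R⁻¹ := by
        have : R⁻¹ ≤ 1 := by
          rw [inv_le_one_iff₀]; right; linarith
        linarith
      rw [abs_of_nonneg h1]
      field_simp
    rw [hxx'] at hlt
    have h1 := abs_lt.mp hlt
    have h2 := abs_le.mp (hunit x' hx'n)
    rw [abs_le]; constructor <;> [linarith [h1.1, h2.1]; linarith [h1.2, h2.2]]
  refine ⟨part1, ?_⟩
  intro R hRge x hx y hy hne
  have hR1 : 1 < R := by
    have h1 : (1 : ℝ) < (1 + ε₀ ^ 2) / (2 * ε₀) := by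
      rw [lt_div_iff₀ (by positivity)]
      nlinarith [sq_nonneg (1 - ε₀)]
    linarith
  rw [mem_sphere_iff_norm, sub_zero] at hx hy
  by_cases hseg : segment ℝ x y ⊆ Aᶜ
  · exact hu x (hnotA x (by rw [hx]; linarith)) y (hnotA y (by rw [hy]; linarith)) hne hseg
  · -- the segment meets A, hence the unit ball
    rw [not_subset] at hseg
    obtain ⟨z, hzseg, hzA⟩ := hseg
    rw [notMem_compl_iff] at hzA
    have hz1 : ‖z‖ < 1 := by
      have := hA1 hzA
      rwa [mem_ball, dist_zero_right] at this
    obtain ⟨a, b, ha, hb, hab, rfl⟩ := hzseg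
    set c := ⟪x, y⟫_ℝ with hc
    have hznorm : ‖a • x + b • y‖ ^ 2 = a^2 * R^2 + 2 * (a * b * c) + b^2 * R^2 := by
      rw [norm_add_sq_real, norm_smul, norm_smul, real_inner_smul_left,
        real_inner_smul_right, Real.norm_eq_abs, Real.norm_eq_abs,
        abs_of_nonneg ha, abs_of_nonneg hb, hx, hy, ← hc]
      ring
    have hz2 : a^2 * R^2 + 2 * (a * b * c) + b^2 * R^2 < 1 := by
      rw [← hznorm]
      nlinarith [norm_nonneg (a • x + b • y)]
    -- deduce c < 2 - R²
    have hclt : c < 2 - R ^ 2 := by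
      by_contra hcon
      push_neg at hcon
      have hP : 0 ≤ a * b * (c - 2 + R ^ 2) := by
        apply mul_nonneg (mul_nonneg ha hb); linarith
      have hQ : 0 ≤ (1 - 4 * (a * b)) * (R ^ 2 - 1) := by
        apply mul_nonneg
        · nlinarith [sq_nonneg (a - b)]
        · nlinarith
      have habR : (a + b) ^ 2 * R ^ 2 = R ^ 2 := by rw [hab]; ring
      nlinarith [hP, hQ, habR]
    have hxy2 : ‖x - y‖ ^ 2 = 2 * R ^ 2 - 2 * c := by
      rw [norm_sub_sq_real, hx, hy, ← hc]; ring
    have hxygt : 2 * Real.sqrt (R ^ 2 - 1) < ‖x - y‖ := by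
      have hs : Real.sqrt (R ^ 2 - 1) ^ 2 = R ^ 2 - 1 :=
        Real.sq_sqrt (by nlinarith)
      nlinarith [norm_nonneg (x - y), Real.sqrt_nonneg (R ^ 2 - 1)]
    have hRs : R - ε₀ ≤ Real.sqrt (R ^ 2 - 1) := by
      have h2 : 1 + ε₀ ^ 2 ≤ R * (2 * ε₀) := (div_le_iff₀ (by positivity)).mp hRge
      calc R - ε₀ = Real.sqrt ((R - ε₀) ^ 2) := (Real.sqrt_sq (by linarith)).symm
        _ ≤ Real.sqrt (R ^ 2 - 1) := Real.sqrt_le_sqrt (by nlinarith)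
    have h1 := abs_le.mp (part1 R hR1 x (by simp [mem_sphere_iff_norm, hx]))
    have h2 := abs_le.mp (part1 R hR1 y (by simp [mem_sphere_iff_norm, hy]))
    rw [abs_lt]
    constructor <;> [linarith [h1.1, h2.2]; linarith [h1.2, h2.1]]
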